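/- If ψ has a 1-in-3 satisfying assignment, then there exists a graph H with exactly 2m+1 vertices and 5m edges that appears as a 2-subdivision in G₂(ψ); in particular, G₂(ψ) has a topological minor at depth 1 of density 5m/(2m+1). -/

import Mathlib

/-- The density `‖G‖/|G|` of a finite simple graph. -/
noncomputable def graphDensity {V : Type*} (G : SimpleGraph V) : ℚ :=
  (G.edgeSet.ncard : ℚ) / (Nat.card V : ℚ)

/-- A model of a topological minor `H` inside `G`: an injective nail map together
with, for every edge of `H`, a path in `G` between the corresponding nails; the
paths are pairwise internally disjoint and their internal vertices avoid the nails. -/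
structure SubdivModel {VH VG : Type*} (H : SimpleGraph VH) (G : SimpleGraph VG) where
  nail : VH → VG
  nail_inj : Function.Injective nail
  path : ∀ u v : VH, H.Adj u v → G.Walk (nail u) (nail v)
  path_isPath : ∀ u v (h : H.Adj u v), (path u v h).IsPath
  path_symm : ∀ u v (h : H.Adj u v), path v u h.symm = (path u v h).reverse
  internal_not_nail : ∀ u v (h : H.Adj u v), ∀ w ∈ (path u v h).support,
    w ≠ nail u → w ≠ nail v → ∀ x, w ≠ nail x
  paths_disjoint : ∀ u v (h : H.Adj u v), ∀ u' v' (h' : H.Adj u' v'),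
    s(u, v) ≠ s(u', v') → ∀ w, w ∈ (path u v h).support → w ∈ (path u' v' h').support →
      (w = nail u ∨ w = nail v) ∧ (w = nail u' ∨ w = nail v')

/-- `H` appears as a `k`-subdivision in `G`: the graph obtained from `H` by
subdividing every edge exactly `k` times is isomorphic to a subgraph of `G`,
i.e. there is a model all of whose paths have length exactly `k + 1`. -/
def AppearsAsSubdivision (k : ℕ) {VH VG : Type*} (H : SimpleGraph VH) (G : SimpleGraph VG) :
    Prop :=
  ∃ M : SubdivModel H G, ∀ u v (h : H.Adj u v), (M.path u v h).length = k + 1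

/-- `H` is an `r/2`-shallow topological minor of `G`: a graph obtained from `H` by
subdividing each edge at most `r` times is isomorphic to a subgraph of `G`,
i.e. there is a model all of whose paths have length at most `r + 1`. -/
def IsShallowTopMinor (r : ℕ) {VH VG : Type*} (H : SimpleGraph VH) (G : SimpleGraph VG) :
    Prop :=
  ∃ M : SubdivModel H G, ∀ u v (h : H.Adj u v), (M.path u v h).length ≤ r + 1

/-- A CNF formula with `m` clauses over `p` (positive) variables, each clause consisting
of exactly three distinct positive literals and every variable occurring in at least
three clauses. -/
structure PosCnf (p m : ℕ) where
  clause : Fin m → Finset (Fin p)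
  card_eq : ∀ i, (clause i).card = 3
  freq : ∀ v : Fin p, 3 ≤ (Finset.univ.filter (fun i => v ∈ clause i)).card

/-- `σ` is a 1-in-3 satisfying assignment for `ψ`: every clause contains exactly one
true variable. -/
def PosCnf.Sat1in3 {p m : ℕ} (ψ : PosCnf p m) (σ : Fin p → Bool) : Prop :=
  ∀ i, ((ψ.clause i).filter (fun v => σ v = true)).card = 1

/-- Occurrences of variables in clauses of `ψ`. -/
def PosCnf.Occ {p m : ℕ} (ψ : PosCnf p m) : Type :=
  {q : Fin m × Fin p // q.2 ∈ ψ.clause q.1}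

/-- `succ` arranges, for each variable, its occurrences into a single cycle: it is a
permutation of occurrences preserving the variable whose restriction to the
occurrences of each variable is one cycle. -/
def CycleData {p m : ℕ} (ψ : PosCnf p m) (succ : Equiv.Perm ψ.Occ) : Prop :=
  (∀ o : ψ.Occ, (succ o).1.2 = o.1.2) ∧
  (∀ o o' : ψ.Occ, o.1.2 = o'.1.2 → succ.SameCycle o o')
/-- Vertices of the graph `G₂(ψ)`: `none` is the apex `a`; `some (inl o)` is the white
vertex of the occurrence `o`; `some (inr (inl o))` is the gray triangle vertex attached
to the white vertex of `o`; `some (inr (inr (o, true, k)))` (`k = 0, 1`) are the two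
black vertices subdividing the apex–white(`o`) edge (with `k = 0` next to the apex);
`some (inr (inr (o, false, k)))` are the two black vertices subdividing the cycle edge
from white(`o`) to white(`succ o`). -/
def G2PsiV {p m : ℕ} (ψ : PosCnf p m) : Type :=
  Option (ψ.Occ ⊕ ψ.Occ ⊕ ψ.Occ × Bool × Fin 2)

/-- The graph `G₂(ψ)` of the reduction (for `r` even, `r = 2`): variable cycles `D_i`
(one white vertex per occurrence), an apex `a` joined to all white vertices, every
cycle edge and apex edge subdivided exactly twice by black vertices, and one gray
triangle per clause, each triangle vertex joined to its corresponding white vertex. -/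
def G2Psi {p m : ℕ} (ψ : PosCnf p m) (succ : Equiv.Perm ψ.Occ) : SimpleGraph (G2PsiV ψ) :=
  SimpleGraph.fromRel (fun x y =>
    -- apex — first black vertex of the apex edge at o
    (∃ o : ψ.Occ, x = none ∧ y = some (Sum.inr (Sum.inr (o, true, 0)))) ∨
    -- the two black vertices of the apex edge at o
    (∃ o : ψ.Occ, x = some (Sum.inr (Sum.inr (o, true, 0))) ∧
      y = some (Sum.inr (Sum.inr (o, true, 1)))) ∨
    -- second black vertex of the apex edge at o — white(o)
    (∃ o : ψ.Occ, x = some (Sum.inr (Sum.inr (o, true, 1))) ∧ y = some (Sum.inl o)) ∨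
    -- white(o) — first black vertex of the cycle edge (o, succ o)
    (∃ o : ψ.Occ, x = some (Sum.inl o) ∧ y = some (Sum.inr (Sum.inr (o, false, 0)))) ∨
    -- the two black vertices of the cycle edge (o, succ o)
    (∃ o : ψ.Occ, x = some (Sum.inr (Sum.inr (o, false, 0))) ∧
      y = some (Sum.inr (Sum.inr (o, false, 1)))) ∨
    -- second black vertex of the cycle edge (o, succ o) — white(succ o)
    (∃ o : ψ.Occ, x = some (Sum.inr (Sum.inr (o, false, 1))) ∧
      y = some (Sum.inl (succ o))) ∨
    -- gray triangle vertex of o — white(o)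
    (∃ o : ψ.Occ, x = some (Sum.inr (Sum.inl o)) ∧ y = some (Sum.inl o)) ∨
    -- gray triangle edges: gray vertices of two occurrences in the same clause
    (∃ o o' : ψ.Occ, o.1.1 = o'.1.1 ∧
      x = some (Sum.inr (Sum.inl o)) ∧ y = some (Sum.inr (Sum.inl o'))))

attribute [reducible] G2PsiV
attribute [reducible] PosCnf.Occ

namespace Stmt9

variable {p m : ℕ} {ψ : PosCnf p m}

instance : DecidableEq ψ.Occ := by unfold PosCnf.Occ; infer_instance
instance : Fintype ψ.Occ := by unfold PosCnf.Occ; infer_instance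

variable {succ : Equiv.Perm ψ.Occ}

/-- three distinct occurrences of a variable -/
lemma three_occs (v : Fin p) : ∃ a b c : ψ.Occ, a.1.2 = v ∧ b.1.2 = v ∧ c.1.2 = v ∧
    a ≠ b ∧ a ≠ c ∧ b ≠ c := by
  have h := ψ.freq v
  have h2 : 2 < (Finset.univ.filter (fun i => v ∈ ψ.clause i)).card := by omega
  obtain ⟨i, j, k, hi, hj, hk, hij, hik, hjk⟩ := Finset.two_lt_card_iff.mp h2
  simp only [Finset.mem_filter] at hi hj hk
  refine ⟨⟨(i, v), hi.2⟩, ⟨(j, v), hj.2⟩, ⟨(k, v), hk.2⟩, rfl, rfl, rfl, ?_, ?_, ?_⟩ <;>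
      intro hh <;>
    [exact hij (congrArg (fun x : ψ.Occ => x.1.1) hh);
     exact hik (congrArg (fun x : ψ.Occ => x.1.1) hh);
     exact hjk (congrArg (fun x : ψ.Occ => x.1.1) hh)]

lemma succ_ne (hsucc : CycleData ψ succ) (o : ψ.Occ) : succ o ≠ o := by
  intro hfix
  obtain ⟨a, b, c, ha, hb, hc, hab, hac, hbc⟩ := three_occs (ψ := ψ) o.1.2
  have key : ∀ x : ψ.Occ, x.1.2 = o.1.2 → x = o := by
    intro x hx
    obtain ⟨n, hn⟩ := (hsucc.2 o x hx.symm)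
    rw [← hn, Equiv.Perm.zpow_apply_eq_self_of_apply_eq_self hfix]
  exact hab ((key a ha).trans (key b hb).symm)

lemma succ_succ_ne (hsucc : CycleData ψ succ) (o : ψ.Occ) : succ (succ o) ≠ o := by
  intro hfix
  obtain ⟨a, b, c, ha, hb, hc, hab, hac, hbc⟩ := three_occs (ψ := ψ) o.1.2
  have key : ∀ x : ψ.Occ, x.1.2 = o.1.2 → x = o ∨ x = succ o := by
    intro x hx
    obtain ⟨n, hn⟩ := (hsucc.2 o x hx.symm)
    have h2 : ∀ j : ℤ, ((succ ^ (2 * j)) o) = o := by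
      intro j
      have := Equiv.Perm.zpow_apply_eq_self_of_apply_eq_self (f := succ ^ 2)
        (x := o) (by simpa [pow_succ] using hfix) j
      have e : succ ^ (2 * j) = (succ ^ 2) ^ j := by rw [zpow_mul]; norm_cast
      rw [e]; exact this
    have hd : n = n % 2 + 2 * (n / 2) := by omega
    have hmod : n % 2 = 0 ∨ n % 2 = 1 := Int.emod_two_eq_zero_or_one n
    rcases hmod with hm | hm
    · left; rw [← hn, hd, hm, zero_add, h2]
    · right; rw [← hn, hd, hm, zpow_add, zpow_one]
      simp only [Equiv.Perm.mul_apply, h2]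
  have := key a ha; have := key b hb; have := key c hc
  rcases key a ha with h1 | h1 <;> rcases key b hb with h2 | h2 <;>
    rcases key c hc with h3 | h3 <;> simp_all

section Graph
variable (ψ) (succ)

def white (o : ψ.Occ) : G2PsiV ψ := some (Sum.inl o)
def gray (o : ψ.Occ) : G2PsiV ψ := some (Sum.inr (Sum.inl o))
def blk (o : ψ.Occ) (b : Bool) (k : Fin 2) : G2PsiV ψ := some (Sum.inr (Sum.inr (o, b, k)))

variable {ψ}

@[simp] lemma white_eq_iff {o o' : ψ.Occ} : white ψ o = white ψ o' ↔ o = o' := by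
  constructor
  · intro h; injections
  · rintro rfl; rfl

@[simp] lemma gray_eq_iff {o o' : ψ.Occ} : gray ψ o = gray ψ o' ↔ o = o' := by
  constructor
  · intro h; injections
  · rintro rfl; rfl

@[simp] lemma blk_eq_iff {o o' : ψ.Occ} {b b' : Bool} {k k' : Fin 2} :
    blk ψ o b k = blk ψ o' b' k' ↔ o = o' ∧ b = b' ∧ k = k' := by
  constructor
  · intro h
    injection h with h
    injection h with h
    injection h with h
    exact ⟨congrArg Prod.fst h, congrArg (fun x => x.2.1) h, congrArg (fun x => x.2.2) h⟩
  · rintro ⟨rfl, rfl, rfl⟩; rfl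

@[simp] lemma white_ne_gray {o o' : ψ.Occ} : white ψ o ≠ gray ψ o' := by
  intro h; injections
@[simp] lemma gray_ne_white {o o' : ψ.Occ} : gray ψ o ≠ white ψ o' :=
  fun h => white_ne_gray h.symm
@[simp] lemma white_ne_blk {o o' : ψ.Occ} {b k} : white ψ o ≠ blk ψ o' b k := by
  intro h; injections
@[simp] lemma blk_ne_white {o o' : ψ.Occ} {b k} : blk ψ o b k ≠ white ψ o' :=
  fun h => white_ne_blk h.symm
@[simp] lemma gray_ne_blk {o o' : ψ.Occ} {b k} : gray ψ o ≠ blk ψ o' b k := by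
  intro h; injections
@[simp] lemma blk_ne_gray {o o' : ψ.Occ} {b k} : blk ψ o b k ≠ gray ψ o' :=
  fun h => gray_ne_blk h.symm
@[simp] lemma none_ne_white {o : ψ.Occ} : (none : G2PsiV ψ) ≠ white ψ o := by
  intro h; cases h
@[simp] lemma white_ne_none {o : ψ.Occ} : white ψ o ≠ (none : G2PsiV ψ) := by
  intro h; cases h
@[simp] lemma none_ne_gray {o : ψ.Occ} : (none : G2PsiV ψ) ≠ gray ψ o := by
  intro h; cases h
@[simp] lemma gray_ne_none {o : ψ.Occ} : gray ψ o ≠ (none : G2PsiV ψ) := by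
  intro h; cases h
@[simp] lemma none_ne_blk {o : ψ.Occ} {b k} : (none : G2PsiV ψ) ≠ blk ψ o b k := by
  intro h; cases h
@[simp] lemma blk_ne_none {o : ψ.Occ} {b k} : blk ψ o b k ≠ (none : G2PsiV ψ) := by
  intro h; cases h

@[simp] lemma fin01 : (0 : Fin 2) ≠ (1 : Fin 2) := by decide
@[simp] lemma fin10 : (1 : Fin 2) ≠ (0 : Fin 2) := by decide

variable (ψ)

lemma adj_ab0 (o : ψ.Occ) : (G2Psi ψ succ).Adj none (blk ψ o true 0) := by
  rw [G2Psi, SimpleGraph.fromRel_adj]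
  exact ⟨none_ne_blk, Or.inl (Or.inl ⟨o, rfl, rfl⟩)⟩

lemma adj_b0b1 (o : ψ.Occ) : (G2Psi ψ succ).Adj (blk ψ o true 0) (blk ψ o true 1) := by
  rw [G2Psi, SimpleGraph.fromRel_adj]
  exact ⟨fun h => fin01 (blk_eq_iff.mp h).2.2, Or.inl (Or.inr (Or.inl ⟨o, rfl, rfl⟩))⟩

lemma adj_b1w (o : ψ.Occ) : (G2Psi ψ succ).Adj (blk ψ o true 1) (white ψ o) := by
  rw [G2Psi, SimpleGraph.fromRel_adj]
  exact ⟨blk_ne_white, Or.inl (Or.inr (Or.inr (Or.inl ⟨o, rfl, rfl⟩)))⟩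

lemma adj_wc0 (o : ψ.Occ) : (G2Psi ψ succ).Adj (white ψ o) (blk ψ o false 0) := by
  rw [G2Psi, SimpleGraph.fromRel_adj]
  exact ⟨white_ne_blk, Or.inl (Or.inr (Or.inr (Or.inr (Or.inl ⟨o, rfl, rfl⟩))))⟩

lemma adj_c0c1 (o : ψ.Occ) : (G2Psi ψ succ).Adj (blk ψ o false 0) (blk ψ o false 1) := by
  rw [G2Psi, SimpleGraph.fromRel_adj]
  exact ⟨fun h => fin01 (blk_eq_iff.mp h).2.2,
    Or.inl (Or.inr (Or.inr (Or.inr (Or.inr (Or.inl ⟨o, rfl, rfl⟩)))))⟩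

lemma adj_c1w (o : ψ.Occ) : (G2Psi ψ succ).Adj (blk ψ o false 1) (white ψ (succ o)) := by
  rw [G2Psi, SimpleGraph.fromRel_adj]
  exact ⟨blk_ne_white,
    Or.inl (Or.inr (Or.inr (Or.inr (Or.inr (Or.inr (Or.inl ⟨o, rfl, rfl⟩))))))⟩

lemma adj_gw (o : ψ.Occ) : (G2Psi ψ succ).Adj (gray ψ o) (white ψ o) := by
  rw [G2Psi, SimpleGraph.fromRel_adj]
  exact ⟨gray_ne_white,
    Or.inl (Or.inr (Or.inr (Or.inr (Or.inr (Or.inr (Or.inr (Or.inl ⟨o, rfl, rfl⟩)))))))⟩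

lemma adj_gg {o o' : ψ.Occ} (hc : o.1.1 = o'.1.1) (hne : o ≠ o') :
    (G2Psi ψ succ).Adj (gray ψ o) (gray ψ o') := by
  rw [G2Psi, SimpleGraph.fromRel_adj]
  exact ⟨fun h => hne (gray_eq_iff.mp h),
    Or.inl (Or.inr (Or.inr (Or.inr (Or.inr (Or.inr (Or.inr (Or.inr ⟨o, o', hc, rfl, rfl⟩)))))))⟩

def apexWalk (o : ψ.Occ) : (G2Psi ψ succ).Walk none (white ψ o) :=
  .cons (adj_ab0 ψ succ o) (.cons (adj_b0b1 ψ succ o) (.cons (adj_b1w ψ succ o) .nil))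

def cycWalk (o o' : ψ.Occ) (h : o' = succ o) : (G2Psi ψ succ).Walk (white ψ o) (white ψ o') :=
  .cons (adj_wc0 ψ succ o) (.cons (adj_c0c1 ψ succ o)
    (.cons (show (G2Psi ψ succ).Adj (blk ψ o false 1) (white ψ o') by
      rw [h]; exact adj_c1w ψ succ o) .nil))

def triWalk (a b : ψ.Occ) (hc : a.1.1 = b.1.1) (hne : a ≠ b) :
    (G2Psi ψ succ).Walk (white ψ a) (white ψ b) :=
  .cons (adj_gw ψ succ a).symm (.cons (adj_gg ψ succ hc hne) (.cons (adj_gw ψ succ b) .nil))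

end Graph

section Model
variable (ψ : PosCnf p m) (succ : Equiv.Perm ψ.Occ) (σ : Fin p → Bool)

abbrev SOcc : Type := {o : ψ.Occ // σ o.1.2 = false}

def HAdj : Option (SOcc ψ σ) → Option (SOcc ψ σ) → Prop
  | none, none => False
  | none, some _ => True
  | some _, none => True
  | some a, some b => a ≠ b ∧ (b.1 = succ a.1 ∨ a.1 = succ b.1 ∨ a.1.1.1 = b.1.1.1)

instance : DecidableRel (HAdj ψ succ σ) := fun x y =>
  match x, y with
  | none, none => .isFalse id
  | none, some _ => .isTrue trivial
  | some _, none => .isTrue trivial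
  | some a, some b =>
    decidable_of_iff (a ≠ b ∧ (b.1 = succ a.1 ∨ a.1 = succ b.1 ∨ a.1.1.1 = b.1.1.1)) Iff.rfl

def HG : SimpleGraph (Option (SOcc ψ σ)) where
  Adj := HAdj ψ succ σ
  symm := by
    constructor
    rintro (_|a) (_|b) h
    · exact h
    · trivial
    · trivial
    · obtain ⟨hne, h1 | h2 | h3⟩ := h
      · exact ⟨hne.symm, Or.inr (Or.inl h1)⟩
      · exact ⟨hne.symm, Or.inl h2⟩
      · exact ⟨hne.symm, Or.inr (Or.inr h3.symm)⟩
  loopless := by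
    constructor
    rintro (_|a) h
    · exact h
    · exact h.1 rfl

attribute [reducible] HG

instance : DecidableRel (HG ψ succ σ).Adj :=
  inferInstanceAs (DecidableRel (HAdj ψ succ σ))

def nailF : Option (SOcc ψ σ) → G2PsiV ψ
  | none => none
  | some a => white ψ a.1

attribute [reducible] nailF

lemma nailF_inj : Function.Injective (nailF ψ σ) := by
  rintro (_|a) (_|b) h
  · rfl
  · exact absurd h (by simp [nailF])
  · exact absurd h (by simp [nailF])
  · simp only [nailF, white_eq_iff] at h
    exact congrArg some (Subtype.ext h)

def pathF : ∀ u v : Option (SOcc ψ σ), HAdj ψ succ σ u v →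
    (G2Psi ψ succ).Walk (nailF ψ σ u) (nailF ψ σ v)
  | none, none, h => h.elim
  | none, some a, _ => apexWalk ψ succ a.1
  | some a, none, _ => (apexWalk ψ succ a.1).reverse
  | some a, some b, h =>
    if h1 : b.1 = succ a.1 then cycWalk ψ succ a.1 b.1 h1
    else if h2 : a.1 = succ b.1 then (cycWalk ψ succ b.1 a.1 h2).reverse
    else triWalk ψ succ a.1 b.1 ((h.2.resolve_left h1).resolve_left h2)
      (fun e => h.1 (Subtype.ext e))

lemma pathF_length (u v : Option (SOcc ψ σ)) (h : HAdj ψ succ σ u v) :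
    (pathF ψ succ σ u v h).length = 3 := by
  match u, v with
  | none, none => exact h.elim
  | none, some a => rfl
  | some a, none => simp [pathF, apexWalk]
  | some a, some b =>
    rw [pathF]
    split_ifs with h1 h2
    · rfl
    · simp [cycWalk]
    · rfl

lemma apexWalk_isPath (o : ψ.Occ) : (apexWalk ψ succ o).IsPath := by
  simp [apexWalk, SimpleGraph.Walk.isPath_def]

lemma cycWalk_isPath (o o' : ψ.Occ) (h : o' = succ o) (hne : o ≠ o') :
    (cycWalk ψ succ o o' h).IsPath := by
  simp [cycWalk, SimpleGraph.Walk.isPath_def, hne]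

lemma triWalk_isPath (a b : ψ.Occ) (hc : a.1.1 = b.1.1) (hne : a ≠ b) :
    (triWalk ψ succ a b hc hne).IsPath := by
  simp [triWalk, SimpleGraph.Walk.isPath_def, hne]

lemma pathF_isPath (hsucc : CycleData ψ succ) (u v : Option (SOcc ψ σ))
    (h : HAdj ψ succ σ u v) : (pathF ψ succ σ u v h).IsPath := by
  match u, v with
  | none, none => exact h.elim
  | none, some a => exact apexWalk_isPath ψ succ a.1
  | some a, none => exact (apexWalk_isPath ψ succ a.1).reverse
  | some a, some b =>
    rw [pathF]
    split_ifs with h1 h2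
    · exact cycWalk_isPath ψ succ a.1 b.1 h1 (fun e => succ_ne hsucc a.1 (h1 ▸ e).symm)
    · exact (cycWalk_isPath ψ succ b.1 a.1 h2 (fun e => succ_ne hsucc b.1 (h2 ▸ e).symm)).reverse
    · exact triWalk_isPath ψ succ a.1 b.1 _ _

lemma pathF_symm (hsucc : CycleData ψ succ) (u v : Option (SOcc ψ σ)) (h : HAdj ψ succ σ u v) :
    pathF ψ succ σ v u ((HG ψ succ σ).adj_symm h) = (pathF ψ succ σ u v h).reverse := by
  match u, v with
  | none, none => exact h.elim
  | none, some a => rfl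
  | some a, none =>
    show pathF ψ succ σ none (some a) _ = _
    rw [pathF, pathF, SimpleGraph.Walk.reverse_reverse]
  | some a, some b =>
    rw [pathF, pathF]
    split_ifs with h1 h2 h3
    · exact absurd ((congrArg succ h1.symm).trans h2.symm) (succ_succ_ne hsucc b.1)
    · rw [SimpleGraph.Walk.reverse_reverse]
    · rfl
    · rfl


def Mid (u v : Option (SOcc ψ σ)) (w : G2PsiV ψ) : Prop :=
  (∃ a : SOcc ψ σ, s(u, v) = s(none, some a) ∧ ∃ k, w = blk ψ a.1 true k) ∨
  (∃ a b : SOcc ψ σ, s(u, v) = s(some a, some b) ∧ b.1 = succ a.1 ∧ ∃ k, w = blk ψ a.1 false k) ∨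
  (∃ a b : SOcc ψ σ, s(u, v) = s(some a, some b) ∧ a.1.1.1 = b.1.1.1 ∧ a ≠ b ∧
    (w = gray ψ a.1 ∨ w = gray ψ b.1))

lemma mem_support_pathF (u v : Option (SOcc ψ σ)) (h : HAdj ψ succ σ u v) (w : G2PsiV ψ)
    (hw : w ∈ (pathF ψ succ σ u v h).support) :
    w = nailF ψ σ u ∨ w = nailF ψ σ v ∨ Mid ψ succ σ u v w := by
  match u, v with
  | none, none => exact h.elim
  | none, some a =>
    simp only [pathF, apexWalk, SimpleGraph.Walk.support_cons,
      SimpleGraph.Walk.support_nil, List.mem_cons, List.mem_singleton, List.mem_nil_iff, or_false] at hw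
    rcases hw with rfl | rfl | rfl | rfl
    · exact Or.inl rfl
    · exact Or.inr (Or.inr (Or.inl ⟨a, rfl, 0, rfl⟩))
    · exact Or.inr (Or.inr (Or.inl ⟨a, rfl, 1, rfl⟩))
    · exact Or.inr (Or.inl rfl)
  | some a, none =>
    simp only [pathF, apexWalk, SimpleGraph.Walk.support_reverse, List.mem_reverse,
      SimpleGraph.Walk.support_cons, SimpleGraph.Walk.support_nil, List.mem_cons,
      List.mem_singleton, List.mem_nil_iff, or_false] at hw
    rcases hw with rfl | rfl | rfl | rfl
    · exact Or.inr (Or.inl rfl)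
    · exact Or.inr (Or.inr (Or.inl ⟨a, Sym2.eq_swap, 0, rfl⟩))
    · exact Or.inr (Or.inr (Or.inl ⟨a, Sym2.eq_swap, 1, rfl⟩))
    · exact Or.inl rfl
  | some a, some b =>
    rw [pathF] at hw
    split_ifs at hw with h1 h2
    · simp only [cycWalk, SimpleGraph.Walk.support_cons, SimpleGraph.Walk.support_nil,
        List.mem_cons, List.mem_singleton, List.mem_nil_iff, or_false] at hw
      rcases hw with rfl | rfl | rfl | rfl
      · exact Or.inl rfl
      · exact Or.inr (Or.inr (Or.inr (Or.inl ⟨a, b, rfl, h1, 0, rfl⟩)))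
      · exact Or.inr (Or.inr (Or.inr (Or.inl ⟨a, b, rfl, h1, 1, rfl⟩)))
      · exact Or.inr (Or.inl rfl)
    · simp only [cycWalk, SimpleGraph.Walk.support_reverse, List.mem_reverse,
        SimpleGraph.Walk.support_cons, SimpleGraph.Walk.support_nil, List.mem_cons,
        List.mem_singleton, List.mem_nil_iff, or_false] at hw
      rcases hw with rfl | rfl | rfl | rfl
      · exact Or.inr (Or.inl rfl)
      · exact Or.inr (Or.inr (Or.inr (Or.inl ⟨b, a, Sym2.eq_swap, h2, 0, rfl⟩)))
      · exact Or.inr (Or.inr (Or.inr (Or.inl ⟨b, a, Sym2.eq_swap, h2, 1, rfl⟩)))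
      · exact Or.inl rfl
    · simp only [triWalk, SimpleGraph.Walk.support_cons, SimpleGraph.Walk.support_nil,
        List.mem_cons, List.mem_singleton, List.mem_nil_iff, or_false] at hw
      rcases hw with rfl | rfl | rfl | rfl
      · exact Or.inl rfl
      · exact Or.inr (Or.inr (Or.inr (Or.inr
          ⟨a, b, rfl, (h.2.resolve_left h1).resolve_left h2, fun e => h.1 e, Or.inl rfl⟩)))
      · exact Or.inr (Or.inr (Or.inr (Or.inr
          ⟨a, b, rfl, (h.2.resolve_left h1).resolve_left h2, fun e => h.1 e, Or.inr rfl⟩)))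
      · exact Or.inr (Or.inl rfl)

lemma Mid_ne_nail {u v : Option (SOcc ψ σ)} {w : G2PsiV ψ} (hm : Mid ψ succ σ u v w)
    (x : Option (SOcc ψ σ)) : w ≠ nailF ψ σ x := by
  have : (∃ o b k, w = blk ψ o b k) ∨ (∃ o, w = gray ψ o) := by
    rcases hm with ⟨a, _, k, rfl⟩ | ⟨a, b, _, _, k, rfl⟩ | ⟨a, b, _, _, _, rfl | rfl⟩
    · exact Or.inl ⟨a.1, true, k, rfl⟩
    · exact Or.inl ⟨a.1, false, k, rfl⟩
    · exact Or.inr ⟨a.1, rfl⟩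
    · exact Or.inr ⟨b.1, rfl⟩
  rcases this with ⟨o, b, k, rfl⟩ | ⟨o, rfl⟩ <;> match x with
  | none => simp [nailF]
  | some c => simp [nailF]

lemma SOcc_ext {a b : SOcc ψ σ} (h1 : a.1.1.1 = b.1.1.1) (h2 : a.1.1.2 = b.1.1.2) : a = b :=
  Subtype.ext (Subtype.ext (Prod.ext h1 h2))

lemma falseFilter_card (hsat : ψ.Sat1in3 σ) (i : Fin m) :
    ((ψ.clause i).filter (fun x => σ x = false)).card = 2 := by
  have h1 := Finset.card_filter_add_card_filter_not
    (s := ψ.clause i) (p := fun x => σ x = true)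
  have h2 : (ψ.clause i).filter (fun x => ¬(σ x = true)) =
      (ψ.clause i).filter (fun x => σ x = false) := by
    apply Finset.filter_congr; intro x _; simp
  rw [h2, hsat i, ψ.card_eq i] at h1
  omega

lemma other_unique (hsat : ψ.Sat1in3 σ) {a b b' : SOcc ψ σ} (hab : a.1.1.1 = b.1.1.1)
    (hab' : a.1.1.1 = b'.1.1.1) (h1 : a ≠ b) (h2 : a ≠ b') : b = b' := by
  set i := a.1.1.1 with hi
  set F := (ψ.clause i).filter (fun x => σ x = false) with hF
  have hva : a.1.1.2 ∈ F := Finset.mem_filter.mpr ⟨a.1.2, a.2⟩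
  have hvb : b.1.1.2 ∈ F := Finset.mem_filter.mpr ⟨hab ▸ b.1.2, b.2⟩
  have hvb' : b'.1.1.2 ∈ F := Finset.mem_filter.mpr ⟨hab' ▸ b'.1.2, b'.2⟩
  have hne1 : a.1.1.2 ≠ b.1.1.2 := fun e => h1 (SOcc_ext ψ σ hab e)
  have hne2 : a.1.1.2 ≠ b'.1.1.2 := fun e => h2 (SOcc_ext ψ σ hab' e)
  by_contra hbb'
  have hne3 : b.1.1.2 ≠ b'.1.1.2 := fun e => hbb' (SOcc_ext ψ σ (hab.symm.trans hab') e)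
  have hsub : ({a.1.1.2, b.1.1.2, b'.1.1.2} : Finset (Fin p)) ⊆ F := by
    intro x hx
    simp only [Finset.mem_insert, Finset.mem_singleton] at hx
    rcases hx with rfl | rfl | rfl <;> assumption
  have h3 : ({a.1.1.2, b.1.1.2, b'.1.1.2} : Finset (Fin p)).card = 3 := by
    rw [Finset.card_insert_of_notMem (by simp [hne1, hne2]),
      Finset.card_insert_of_notMem (by simp [hne3]), Finset.card_singleton]
  have := Finset.card_le_card hsub
  rw [h3, falseFilter_card ψ σ hsat i] at this
  omega

lemma Mid_unique (hsat : ψ.Sat1in3 σ) {u v u' v' : Option (SOcc ψ σ)} {w : G2PsiV ψ}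
    (h : Mid ψ succ σ u v w) (h' : Mid ψ succ σ u' v' w) : s(u, v) = s(u', v') := by
  rcases h with ⟨a, he, k, hw⟩ | ⟨a, b, he, hs, k, hw⟩ | ⟨a, b, he, hc, hne, hw⟩ <;>
    rcases h' with ⟨a', he', k', hw'⟩ | ⟨a', b', he', hs', k', hw'⟩ | ⟨a', b', he', hc', hne', hw'⟩
  · -- apex/apex
    rw [hw] at hw'
    obtain ⟨h1, -, -⟩ := blk_eq_iff.mp hw'
    rw [he, he', Subtype.ext h1]
  · rw [hw] at hw'; exact absurd (blk_eq_iff.mp hw').2.1 (by simp)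
  · rcases hw' with hw' | hw' <;> rw [hw] at hw' <;> exact absurd hw' blk_ne_gray
  · rw [hw'] at hw; exact absurd (blk_eq_iff.mp hw).2.1 (by simp)
  · -- cyc/cyc
    rw [hw] at hw'
    obtain ⟨h1, -, -⟩ := blk_eq_iff.mp hw'
    have ha : a = a' := Subtype.ext h1
    have hb : b = b' := Subtype.ext (hs.trans (by rw [ha, ← hs']))
    rw [he, he', ha, hb]
  · rcases hw' with hw' | hw' <;> rw [hw] at hw' <;> exact absurd hw' blk_ne_gray
  · rcases hw with hw | hw <;> exact absurd (hw.symm.trans hw') gray_ne_blk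
  · rcases hw with hw | hw <;> exact absurd (hw.symm.trans hw') gray_ne_blk
  · -- tri/tri
    rw [he, he']
    rcases hw with hw | hw <;> rcases hw' with hw' | hw' <;> rw [hw] at hw' <;>
      have h1 := gray_eq_iff.mp hw'
    · have ha : a = a' := Subtype.ext h1
      have hb : b = b' := other_unique ψ σ hsat hc (ha ▸ hc') hne (ha ▸ hne')
      rw [ha, hb]
    · have ha : a = b' := Subtype.ext h1
      have hca' : a.1.1.1 = a'.1.1.1 := by rw [ha, ← hc']
      have hb : b = a' := other_unique ψ σ hsat hc hca' hne
        (fun e => hne' (by rw [← e]; exact ha))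
      rw [ha, hb, Sym2.eq_swap]
    · have ha : b = a' := Subtype.ext h1
      have hcb' : b.1.1.1 = b'.1.1.1 := by rw [ha]; exact hc'
      have hb : a = b' := other_unique ψ σ hsat hc.symm hcb' (Ne.symm hne)
        (fun e => hne' (by rw [← ha]; exact e))
      rw [hb, ha, Sym2.eq_swap]
    · have ha : b = b' := Subtype.ext h1
      have hca' : b.1.1.1 = a'.1.1.1 := by rw [ha]; exact hc'.symm
      have hb : a = a' := other_unique ψ σ hsat hc.symm hca' (Ne.symm hne)
        (fun e => hne' (by rw [← e]; exact ha))
      rw [ha, hb]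


def theModel (hsucc : CycleData ψ succ) (hsat : ψ.Sat1in3 σ) :
    SubdivModel (HG ψ succ σ) (G2Psi ψ succ) where
  nail := nailF ψ σ
  nail_inj := nailF_inj ψ σ
  path := pathF ψ succ σ
  path_isPath := pathF_isPath ψ succ σ hsucc
  path_symm := fun u v h => pathF_symm ψ succ σ hsucc u v h
  internal_not_nail := by
    intro u v h w hw hu hv x
    rcases mem_support_pathF ψ succ σ u v h w hw with h1 | h1 | h1
    · exact absurd h1 hu
    · exact absurd h1 hv
    · exact Mid_ne_nail ψ succ σ h1 x
  paths_disjoint := by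
    intro u v h u' v' h' hne w hw hw'
    rcases mem_support_pathF ψ succ σ u v h w hw with h1 | h1 | h1 <;>
      rcases mem_support_pathF ψ succ σ u' v' h' w hw' with h2 | h2 | h2
    · exact ⟨Or.inl h1, Or.inl h2⟩
    · exact ⟨Or.inl h1, Or.inr h2⟩
    · exact absurd h1 (Mid_ne_nail ψ succ σ h2 u)
    · exact ⟨Or.inr h1, Or.inl h2⟩
    · exact ⟨Or.inr h1, Or.inr h2⟩
    · exact absurd h1 (Mid_ne_nail ψ succ σ h2 v)
    · exact absurd h2 (Mid_ne_nail ψ succ σ h1 u')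
    · exact absurd h2 (Mid_ne_nail ψ succ σ h1 v')
    · exact absurd (Mid_unique ψ succ σ hsat h1 h2) hne


def soccEquiv : SOcc ψ σ ≃ Σ i : Fin m, {x : Fin p // x ∈ ψ.clause i ∧ σ x = false} where
  toFun a := ⟨a.1.1.1, a.1.1.2, a.1.2, a.2⟩
  invFun x := ⟨⟨(x.1, x.2.1), x.2.2.1⟩, x.2.2.2⟩
  left_inv := fun a => rfl
  right_inv := fun x => rfl

lemma card_SOcc (hsat : ψ.Sat1in3 σ) : Fintype.card (SOcc ψ σ) = 2 * m := by
  rw [Fintype.card_congr (soccEquiv ψ σ), Fintype.card_sigma]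
  have h : ∀ i : Fin m, Fintype.card {x : Fin p // x ∈ ψ.clause i ∧ σ x = false} = 2 := by
    intro i
    rw [Fintype.card_subtype, ← falseFilter_card ψ σ hsat i]
    congr 1
    ext x
    simp [Finset.mem_filter]
  simp only [h, Finset.sum_const, Finset.card_univ, Fintype.card_fin, smul_eq_mul]
  ring

def mkS (hsucc : CycleData ψ succ) (a : SOcc ψ σ) : SOcc ψ σ :=
  ⟨succ a.1, by rw [hsucc.1]; exact a.2⟩

lemma edge_count (hsucc : CycleData ψ succ) (hsat : ψ.Sat1in3 σ) :
    (HG ψ succ σ).edgeSet.ncard = 5 * m := by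
  classical
  rw [← SimpleGraph.coe_edgeFinset, Set.ncard_coe_finset]
  -- choose the two false occurrences of each clause
  have hex : ∀ i : Fin m, ∃ ab : SOcc ψ σ × SOcc ψ σ,
      ab.1.1.1.1 = i ∧ ab.2.1.1.1 = i ∧ ab.1 ≠ ab.2 := by
    intro i
    obtain ⟨x, y, hxy, hF⟩ := Finset.card_eq_two.mp (falseFilter_card ψ σ hsat i)
    have hx : x ∈ (ψ.clause i).filter (fun z => σ z = false) := by rw [hF]; simp
    have hy : y ∈ (ψ.clause i).filter (fun z => σ z = false) := by rw [hF]; simp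
    rw [Finset.mem_filter] at hx hy
    refine ⟨(⟨⟨(i, x), hx.1⟩, hx.2⟩, ⟨⟨(i, y), hy.1⟩, hy.2⟩), rfl, rfl, ?_⟩
    intro e
    exact hxy (congrArg (fun z : SOcc ψ σ => z.1.1.2) e)
  choose f hf1 hf2 hf3 using hex
  have pair_eq : ∀ (a b c d : SOcc ψ σ), a.1.1.1 = b.1.1.1 → c.1.1.1 = a.1.1.1 →
      d.1.1.1 = a.1.1.1 → a ≠ b → c ≠ d →
      s((some a : Option (SOcc ψ σ)), some b) = s(some c, some d) := by
    intro a b c d hab hca hda hne hne'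
    by_cases hac : a = c
    · have hbd : b = d := other_unique ψ σ hsat hab hda.symm hne
        (fun e => hne' (by rw [← hac]; exact e))
      rw [hac, hbd]
    · have had : a = d := other_unique ψ σ hsat hca (hca.trans hda.symm) (fun e => hac e.symm)
        hne'
      have hbc : b = c := other_unique ψ σ hsat hab hca.symm hne
        (fun e => hac (by rw [e]))
      rw [had, hbc, Sym2.eq_swap]
  set A : Finset (Sym2 (Option (SOcc ψ σ))) :=
    Finset.univ.image (fun a : SOcc ψ σ => s((none : Option (SOcc ψ σ)), some a)) with hA
  set B : Finset (Sym2 (Option (SOcc ψ σ))) :=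
    Finset.univ.image (fun a : SOcc ψ σ => s((some a : Option (SOcc ψ σ)),
      some (mkS ψ succ σ hsucc a))) with hB
  set C : Finset (Sym2 (Option (SOcc ψ σ))) :=
    Finset.univ.image (fun i : Fin m => s((some (f i).1 : Option (SOcc ψ σ)),
      some (f i).2)) with hC
  have hmkS_ne : ∀ a : SOcc ψ σ, a ≠ mkS ψ succ σ hsucc a := by
    intro a e
    exact succ_ne hsucc a.1 (congrArg Subtype.val e).symm
  have hsplit : (HG ψ succ σ).edgeFinset = A ∪ B ∪ C := by
    ext e
    induction e with
    | _ x y =>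
      rw [SimpleGraph.mem_edgeFinset, SimpleGraph.mem_edgeSet]
      constructor
      · intro hadj
        match x, y with
        | none, none => exact hadj.elim
        | none, some a =>
          exact Finset.mem_union_left _ (Finset.mem_union_left _
            (Finset.mem_image.mpr ⟨a, Finset.mem_univ a, rfl⟩))
        | some a, none =>
          refine Finset.mem_union_left _ (Finset.mem_union_left _
            (Finset.mem_image.mpr ⟨a, Finset.mem_univ a, ?_⟩))
          exact Sym2.eq_swap
        | some a, some b =>
          obtain ⟨hne, h1 | h2 | h3⟩ := hadj
          · refine Finset.mem_union_left _ (Finset.mem_union_right _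
              (Finset.mem_image.mpr ⟨a, Finset.mem_univ a, ?_⟩))
            rw [show mkS ψ succ σ hsucc a = b from (Subtype.ext h1).symm]
          · refine Finset.mem_union_left _ (Finset.mem_union_right _
              (Finset.mem_image.mpr ⟨b, Finset.mem_univ b, ?_⟩))
            rw [show mkS ψ succ σ hsucc b = a from (Subtype.ext h2).symm, Sym2.eq_swap]
          · refine Finset.mem_union_right _
              (Finset.mem_image.mpr ⟨a.1.1.1, Finset.mem_univ _, ?_⟩)
            exact (pair_eq a b (f a.1.1.1).1 (f a.1.1.1).2 h3
              (hf1 a.1.1.1) (hf2 a.1.1.1) hne (hf3 a.1.1.1)).symm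
      · intro hmem
        rcases Finset.mem_union.mp hmem with hAB2 | hc
        · rcases Finset.mem_union.mp hAB2 with ha | hb
          · obtain ⟨a, -, he⟩ := Finset.mem_image.mp ha
            rcases Sym2.eq_iff.mp he with ⟨h1, h2⟩ | ⟨h1, h2⟩
            · rw [← h1, ← h2]; trivial
            · rw [← h1, ← h2]; trivial
          · obtain ⟨a, -, he⟩ := Finset.mem_image.mp hb
            have hadj : HAdj ψ succ σ (some a) (some (mkS ψ succ σ hsucc a)) :=
              ⟨hmkS_ne a, Or.inl rfl⟩
            rcases Sym2.eq_iff.mp he with ⟨h1, h2⟩ | ⟨h1, h2⟩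
            · rw [← h1, ← h2]; exact hadj
            · rw [← h1, ← h2]; exact (HG ψ succ σ).adj_symm hadj
        · obtain ⟨i, -, he⟩ := Finset.mem_image.mp hc
          have hadj : HAdj ψ succ σ (some (f i).1) (some (f i).2) :=
            ⟨hf3 i, Or.inr (Or.inr ((hf1 i).trans (hf2 i).symm))⟩
          rcases Sym2.eq_iff.mp he with ⟨h1, h2⟩ | ⟨h1, h2⟩
          · rw [← h1, ← h2]; exact hadj
          · rw [← h1, ← h2]; exact (HG ψ succ σ).adj_symm hadj
  have cardA : A.card = 2 * m := by
    rw [hA, Finset.card_image_of_injective _ (fun a b h => by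
      rcases Sym2.eq_iff.mp h with ⟨-, h2⟩ | ⟨h1, -⟩
      · exact Option.some_injective _ h2
      · exact absurd h1 (by simp)), Finset.card_univ, card_SOcc ψ σ hsat]
  have cardB : B.card = 2 * m := by
    rw [hB, Finset.card_image_of_injective _ (fun a b h => by
      rcases Sym2.eq_iff.mp h with ⟨h1, -⟩ | ⟨h1, h2⟩
      · exact Option.some_injective _ h1
      · exfalso
        have e1 : a = mkS ψ succ σ hsucc b := Option.some_injective _ h1
        have e2 : mkS ψ succ σ hsucc a = b := Option.some_injective _ h2
        have v1 := congrArg Subtype.val e1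
        have v2 := congrArg Subtype.val e2
        simp only [mkS] at v1 v2
        refine succ_succ_ne hsucc b.1 ?_
        rw [← v1]; exact v2), Finset.card_univ, card_SOcc ψ σ hsat]
  have cardC : C.card = m := by
    rw [hC, Finset.card_image_of_injective _ (fun i j h => by
      rcases Sym2.eq_iff.mp h with ⟨h1, -⟩ | ⟨h1, -⟩
      · have := congrArg (fun z : Option (SOcc ψ σ) => z.map (fun w => w.1.1.1)) h1
        simpa [hf1 i, hf1 j] using this
      · have := congrArg (fun z : Option (SOcc ψ σ) => z.map (fun w => w.1.1.1)) h1
        simpa [hf1 i, hf2 j] using this), Finset.card_univ, Fintype.card_fin]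
  have dAB : Disjoint A B := by
    rw [Finset.disjoint_left]
    rintro e ha hb
    obtain ⟨a, -, he⟩ := Finset.mem_image.mp ha
    obtain ⟨b, -, he'⟩ := Finset.mem_image.mp hb
    rw [← he'] at he
    rcases Sym2.eq_iff.mp he with ⟨h1, -⟩ | ⟨h1, -⟩
    · exact absurd h1 (by simp)
    · exact absurd h1 (by simp)
  have dAC : Disjoint A C := by
    rw [Finset.disjoint_left]
    rintro e ha hc
    obtain ⟨a, -, he⟩ := Finset.mem_image.mp ha
    obtain ⟨i, -, he'⟩ := Finset.mem_image.mp hc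
    rw [← he'] at he
    rcases Sym2.eq_iff.mp he with ⟨h1, -⟩ | ⟨h1, -⟩
    · exact absurd h1 (by simp)
    · exact absurd h1 (by simp)
  have dBC : Disjoint B C := by
    rw [Finset.disjoint_left]
    rintro e hb hc
    obtain ⟨a, -, he⟩ := Finset.mem_image.mp hb
    obtain ⟨i, -, he'⟩ := Finset.mem_image.mp hc
    rw [← he'] at he
    have hvar : ∀ c d : SOcc ψ σ, c = (f i).1 → d = (f i).2 →
        c.1.1.2 = d.1.1.2 → False := by
      intro c d hc' hd' hv
      refine hf3 i ?_
      rw [← hc', ← hd']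
      exact SOcc_ext ψ σ (by rw [hc', hd', hf1 i, hf2 i]) hv
    have hv2 : (mkS ψ succ σ hsucc a).1.1.2 = a.1.1.2 := hsucc.1 a.1
    rcases Sym2.eq_iff.mp he with ⟨h1, h2⟩ | ⟨h1, h2⟩
    · exact hvar _ _ (Option.some_injective _ h1) (Option.some_injective _ h2) (hv2.symm)
    · exact hvar _ _ (Option.some_injective _ h2) (Option.some_injective _ h1) hv2
  rw [hsplit, Finset.card_union_of_disjoint (Finset.disjoint_union_left.mpr ⟨dAC, dBC⟩),
    Finset.card_union_of_disjoint dAB, cardA, cardB, cardC]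
  ring

end Model
end Stmt9

/-- If `ψ` has a 1-in-3 satisfying assignment, then some graph `H` with
exactly `2m+1` vertices and `5m` edges appears as a `2`-subdivision in `G₂(ψ)`; in
particular, `G₂(ψ)` has a topological minor at depth `1` of density `5m/(2m+1)`. -/
theorem stmt_9 {p m : ℕ} (ψ : PosCnf p m) (succ : Equiv.Perm ψ.Occ)
    (hsucc : CycleData ψ succ) (hsat : ∃ σ, ψ.Sat1in3 σ) :
    (∃ (VH : Type) (H : SimpleGraph VH),
      AppearsAsSubdivision 2 H (G2Psi ψ succ) ∧
      Nat.card VH = 2 * m + 1 ∧ H.edgeSet.ncard = 5 * m) ∧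
    (∃ (VH : Type) (H : SimpleGraph VH),
      IsShallowTopMinor 2 H (G2Psi ψ succ) ∧
      graphDensity H = (5 * m : ℚ) / (2 * m + 1)) := by
  obtain ⟨σ, hsat⟩ := hsat
  have hv : Nat.card (Option (Stmt9.SOcc ψ σ)) = 2 * m + 1 := by
    rw [Nat.card_eq_fintype_card, Fintype.card_option, Stmt9.card_SOcc ψ σ hsat]
  have he := Stmt9.edge_count ψ succ σ hsucc hsat
  have happ : AppearsAsSubdivision 2 (Stmt9.HG ψ succ σ) (G2Psi ψ succ) :=
    ⟨Stmt9.theModel ψ succ σ hsucc hsat, fun u v h => Stmt9.pathF_length ψ succ σ u v h⟩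
  refine ⟨⟨Option (Stmt9.SOcc ψ σ), Stmt9.HG ψ succ σ, happ, hv, he⟩,
    ⟨Option (Stmt9.SOcc ψ σ), Stmt9.HG ψ succ σ, ?_, ?_⟩⟩
  · obtain ⟨M, hM⟩ := happ
    exact ⟨M, fun u v h => le_of_eq (hM u v h)⟩
  · rw [graphDensity, he, hv]
    push_cast
    ring
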